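/- Let n ≥ 2, Ω ⊂ ℝⁿ a domain, α ∈ (-n, 0), and φ a Young function. If u is a measurable function on Ω with finite Orlicz-Besov seminorm ‖u‖_{Ḃ^{α,φ}(Ω)}, then u is locally integrable on Ω. -/

import Mathlib

open MeasureTheory Set Filter
set_option maxHeartbeats 2000000
open scoped ENNReal NNReal Topology

noncomputable def Lunder (n : ℕ) (α : ℝ) (φ : ℝ → ℝ) : ℝ≥0∞ :=
  ⨆ x ∈ Set.Ioi (0:ℝ), ∫⁻ t in Set.Ioo (0:ℝ) 1,
    ENNReal.ofReal (φ (t ^ (1 - α) * x) / (φ x * t ^ (n + 1)))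

noncomputable def Lover (n : ℕ) (α : ℝ) (φ : ℝ → ℝ) : ℝ≥0∞ :=
  ⨆ x ∈ Set.Ioi (0:ℝ), ∫⁻ t in Set.Ioi (1:ℝ),
    ENNReal.ofReal (φ (t ^ (-α) * x) / (φ x * t ^ (n + 1)))

noncomputable def besovSet (n : ℕ) (α : ℝ) (φ : ℝ → ℝ)
    (Ω : Set (EuclideanSpace ℝ (Fin n))) (u : EuclideanSpace ℝ (Fin n) → ℝ) : Set ℝ :=
  {l : ℝ | 0 < l ∧
    (∫⁻ x in Ω, ∫⁻ y in Ω,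
      ENNReal.ofReal (φ (|u x - u y| / (l * ‖x - y‖ ^ α)) / ‖x - y‖ ^ (2 * n))) ≤ 1}

private lemma phi_nonneg (φ : ℝ → ℝ) (hzero : φ 0 = 0) (hpos : ∀ t > 0, 0 < φ t)
    {s : ℝ} (hs : 0 ≤ s) : 0 ≤ φ s := by
  rcases hs.eq_or_lt with h | h
  · simp [← h, hzero]
  · exact (hpos s h).le

private lemma young_lin (φ : ℝ → ℝ) (hconv : ConvexOn ℝ (Set.Ici 0) φ) (hzero : φ 0 = 0)
    (hpos : ∀ t > 0, 0 < φ t) {s : ℝ} (hs : 0 ≤ s) : s ≤ φ s / φ 1 + 1 := by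
  have h1 : 0 < φ 1 := hpos 1 one_pos
  rcases le_or_gt s 1 with h | h
  · have h2 : 0 ≤ φ s := phi_nonneg φ hzero hpos hs
    have h3 : 0 ≤ φ s / φ 1 := div_nonneg h2 h1.le
    linarith
  · have hs0 : 0 < s := lt_trans one_pos h
    have hinv : 1 / s ≤ 1 := by rw [div_le_one hs0]; exact h.le
    have hkey : φ 1 ≤ s⁻¹ * φ s := by
      have h2 := hconv.2 (Set.mem_Ici.mpr hs) (Set.mem_Ici.mpr (le_refl (0:ℝ)))
        (show (0:ℝ) ≤ 1/s by positivity)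
        (show (0:ℝ) ≤ 1 - 1/s by linarith)
        (by ring)
      simpa [smul_eq_mul, hzero, one_div, inv_mul_cancel₀ (ne_of_gt hs0)] using h2
    have h3 : s * φ 1 ≤ φ s := by
      have h4 := mul_le_mul_of_nonneg_left hkey hs0.le
      rwa [← mul_assoc, mul_inv_cancel₀ hs0.ne', one_mul] at h4
    have h5 : s ≤ φ s / φ 1 := (le_div_iff₀ h1).mpr h3
    linarith

private lemma finite_ball_rpow {E : Type*} [NormedAddCommGroup E] [NormedSpace ℝ E]
    [FiniteDimensional ℝ E] [MeasurableSpace E] [BorelSpace E]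
    (μ : Measure E) [μ.IsAddHaarMeasure] {α : ℝ}
    (hα1 : -(Module.finrank ℝ E : ℝ) < α) (hα2 : α < 0) (R : ℝ) :
    ∫⁻ x in Metric.ball (0:E) R, ENNReal.ofReal (‖x‖ ^ α) ∂μ < ∞ := by
  set d := Module.finrank ℝ E with hd
  have hmeas : Measurable fun x : E => ‖x‖ ^ α := measurable_norm.pow_const α
  rw [lintegral_eq_lintegral_meas_le _
    (Eventually.of_forall fun x => Real.rpow_nonneg (norm_nonneg x) α) hmeas.aemeasurable]
  set ν := μ.restrict (Metric.ball (0:E) R) with hν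
  calc ∫⁻ t in Ioi (0:ℝ), ν {a | t ≤ ‖a‖ ^ α}
      ≤ ∫⁻ t in Ioc (0:ℝ) 1 ∪ Ioi 1, ν {a | t ≤ ‖a‖ ^ α} :=
        lintegral_mono_set Ioi_subset_Ioc_union_Ioi
    _ ≤ (∫⁻ t in Ioc (0:ℝ) 1, ν {a | t ≤ ‖a‖ ^ α})
        + ∫⁻ t in Ioi (1:ℝ), ν {a | t ≤ ‖a‖ ^ α} := lintegral_union_le _ _ _
    _ < ∞ := ENNReal.add_lt_top.2 ⟨?_, ?_⟩
  · calc (∫⁻ t in Ioc (0:ℝ) 1, ν {a | t ≤ ‖a‖ ^ α})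
        ≤ ∫⁻ _ in Ioc (0:ℝ) 1, μ (Metric.ball (0:E) R) := by
          refine lintegral_mono fun t => ?_
          refine le_trans (measure_mono (Set.subset_univ _)) (le_of_eq ?_)
          rw [hν, Measure.restrict_apply_univ]
      _ = μ (Metric.ball (0:E) R) * volume (Ioc (0:ℝ) 1) := setLIntegral_const _ _
      _ < ∞ := by
          apply ENNReal.mul_lt_top measure_ball_lt_top
          rw [Real.volume_Ioc]
          exact ENNReal.ofReal_lt_top
  · have hsub : ∀ t : ℝ, 0 < t → {a : E | t ≤ ‖a‖ ^ α} ⊆ Metric.closedBall 0 (t ^ α⁻¹) := by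
      intro t ht a ha
      simp only [Set.mem_setOf_eq] at ha
      rcases eq_or_lt_of_le (norm_nonneg a) with h0 | h0
      · exfalso
        rw [← h0, Real.zero_rpow (ne_of_lt hα2)] at ha
        linarith
      · rw [Metric.mem_closedBall, dist_zero_right]
        exact (Real.le_rpow_inv_iff_of_neg h0 ht hα2).mpr ha
    have hbound : ∀ t ∈ Ioi (1:ℝ), ν {a | t ≤ ‖a‖ ^ α}
        ≤ ENNReal.ofReal (t ^ (α⁻¹ * d)) * μ (Metric.ball (0:E) 1) := by
      intro t ht
      have ht0 : (0:ℝ) < t := lt_trans one_pos ht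
      calc ν {a | t ≤ ‖a‖ ^ α} ≤ μ {a | t ≤ ‖a‖ ^ α} := Measure.restrict_le_self _
        _ ≤ μ (Metric.closedBall 0 (t ^ α⁻¹)) := measure_mono (hsub t ht0)
        _ = ENNReal.ofReal ((t ^ α⁻¹) ^ d) * μ (Metric.ball 0 1) :=
            μ.addHaar_closedBall 0 (Real.rpow_nonneg ht0.le _)
        _ = ENNReal.ofReal (t ^ (α⁻¹ * d)) * μ (Metric.ball 0 1) := by
            rw [← Real.rpow_natCast (t ^ α⁻¹) d, ← Real.rpow_mul ht0.le]
    calc ∫⁻ t in Ioi (1:ℝ), ν {a | t ≤ ‖a‖ ^ α}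
        ≤ ∫⁻ t in Ioi (1:ℝ), ENNReal.ofReal (t ^ (α⁻¹ * d)) * μ (Metric.ball (0:E) 1) := by
          refine lintegral_mono_ae ?_
          filter_upwards [ae_restrict_mem measurableSet_Ioi] with t ht using hbound t ht
      _ = (∫⁻ t in Ioi (1:ℝ), ENNReal.ofReal (t ^ (α⁻¹ * d))) * μ (Metric.ball (0:E) 1) :=
          lintegral_mul_const' _ _ measure_ball_lt_top.ne
      _ < ∞ := by
          apply ENNReal.mul_lt_top ?_ measure_ball_lt_top
          have hexp : α⁻¹ * d < -1 := by
            have h1 : (d:ℝ) / α < -1 := by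
              rw [div_lt_iff_of_neg hα2]
              linarith
            calc α⁻¹ * d = d / α := by rw [div_eq_mul_inv, mul_comm]
              _ < -1 := h1
          exact (integrableOn_Ioi_rpow_of_lt hexp one_pos).setLIntegral_lt_top

private lemma core (n : ℕ) (α : ℝ) (hα1 : -(n : ℝ) < α) (hα2 : α < 0)
    (φ : ℝ → ℝ) (hconv : ConvexOn ℝ (Set.Ici 0) φ)
    (hcont : ContinuousOn φ (Set.Ici 0))
    (hzero : φ 0 = 0) (hpos : ∀ t > 0, 0 < φ t)
    (u : EuclideanSpace ℝ (Fin n) → ℝ) (hu : Measurable u)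
    (l : ℝ) (hl : 0 < l) (z : EuclideanSpace ℝ (Fin n)) (r : ℝ) (hr : 0 < r)
    (hI : (∫⁻ x in Metric.ball z r, ∫⁻ y in Metric.ball z r,
      ENNReal.ofReal (φ (|u x - u y| / (l * ‖x - y‖ ^ α)) / ‖x - y‖ ^ (2 * n))) ≤ 1) :
    IntegrableOn u (Metric.ball z r) := by
  set B := Metric.ball z r with hBdef
  have hφ1 : 0 < φ 1 := hpos 1 one_pos
  have hφc : Continuous fun t : ℝ => φ |t| :=
    hcont.comp_continuous continuous_abs fun t => Set.mem_Ici.mpr (abs_nonneg t)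
  have harg_nonneg : ∀ x y : EuclideanSpace ℝ (Fin n),
      0 ≤ |u x - u y| / (l * ‖x - y‖ ^ α) := fun x y =>
    div_nonneg (abs_nonneg _) (mul_nonneg hl.le (Real.rpow_nonneg (norm_nonneg _) _))
  have hFm : Measurable fun p : EuclideanSpace ℝ (Fin n) × EuclideanSpace ℝ (Fin n) =>
      ENNReal.ofReal (φ (|u p.1 - u p.2| / (l * ‖p.1 - p.2‖ ^ α)) / ‖p.1 - p.2‖ ^ (2 * n)) := by
    have h1 : Measurable fun p : EuclideanSpace ℝ (Fin n) × EuclideanSpace ℝ (Fin n) =>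
        |u p.1 - u p.2| / (l * ‖p.1 - p.2‖ ^ α) :=
      (((hu.comp measurable_fst).sub (hu.comp measurable_snd)).abs).div
        (measurable_const.mul ((measurable_fst.sub measurable_snd).norm.pow_const α))
    have h2 : (fun p : EuclideanSpace ℝ (Fin n) × EuclideanSpace ℝ (Fin n) =>
        φ (|u p.1 - u p.2| / (l * ‖p.1 - p.2‖ ^ α)))
        = fun p => φ |(|u p.1 - u p.2| / (l * ‖p.1 - p.2‖ ^ α))| := by
      funext p; rw [abs_of_nonneg (harg_nonneg _ _)]
    refine Measurable.ennreal_ofReal (Measurable.div ?_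
      ((measurable_fst.sub measurable_snd).norm.pow_const (2*n)))
    rw [h2]
    exact hφc.measurable.comp h1
  set C₁ : ℝ := l / φ 1 * (2*r) ^ (2*(n:ℝ) + α) with hC₁def
  have hC₁ : 0 ≤ C₁ := mul_nonneg (div_nonneg hl.le hφ1.le)
    (Real.rpow_nonneg (by positivity) _)
  -- pointwise bound
  have hpt : ∀ x ∈ B, ∀ y ∈ B,
      ENNReal.ofReal |u x - u y| ≤
        ENNReal.ofReal C₁
          * ENNReal.ofReal (φ (|u x - u y| / (l * ‖x - y‖ ^ α)) / ‖x - y‖ ^ (2 * n))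
        + ENNReal.ofReal l * ENNReal.ofReal (‖x - y‖ ^ α) := by
    intro x hx y hy
    rcases eq_or_ne x y with h | h
    · subst h; simp
    · have hd0 : 0 < ‖x - y‖ := by
        rw [norm_pos_iff, sub_ne_zero]; exact h
      have hd2r : ‖x - y‖ ≤ 2 * r := by
        have h1 : dist x y ≤ dist x z + dist z y := dist_triangle x z y
        have h2 : dist x z < r := Metric.mem_ball.mp hx
        have h3 : dist z y < r := by rw [dist_comm]; exact Metric.mem_ball.mp hy
        rw [← dist_eq_norm]
        linarith
      have hdα : 0 < ‖x - y‖ ^ α := Real.rpow_pos_of_pos hd0 α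
      have hd2n : (0:ℝ) < ‖x - y‖ ^ (2*n) := pow_pos hd0 _
      set s := |u x - u y| / (l * ‖x - y‖ ^ α) with hsdef
      have hs0 : 0 ≤ s := harg_nonneg x y
      have hφs : 0 ≤ φ s := phi_nonneg φ hzero hpos hs0
      have hkey : s ≤ φ s / φ 1 + 1 := young_lin φ hconv hzero hpos hs0
      have hA : |u x - u y| = s * (l * ‖x - y‖ ^ α) := by
        rw [hsdef]
        exact (div_mul_cancel₀ _ (mul_pos hl hdα).ne').symm
      have e1 : ‖x - y‖ ^ (2*n) * ‖x - y‖ ^ α ≤ (2*r) ^ (2*(n:ℝ) + α) := by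
        have e2 : ‖x - y‖ ^ (2*n) * ‖x - y‖ ^ α = ‖x - y‖ ^ (2*(n:ℝ) + α) := by
          rw [← Real.rpow_natCast ‖x - y‖ (2*n), ← Real.rpow_add hd0]
          congr 1
          push_cast
          ring
        rw [e2]
        apply Real.rpow_le_rpow hd0.le hd2r
        have hn0 : (0:ℝ) ≤ (n:ℝ) := Nat.cast_nonneg n
        linarith
      have hreal : |u x - u y| ≤ C₁ * (φ s / ‖x - y‖ ^ (2 * n)) + l * ‖x - y‖ ^ α := by
        have hlφ : 0 ≤ l / φ 1 := div_nonneg hl.le hφ1.le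
        have step1 : |u x - u y| ≤ (φ s / φ 1 + 1) * (l * ‖x - y‖ ^ α) := by
          rw [hA]
          exact mul_le_mul_of_nonneg_right hkey (by positivity)
        have step2 : φ s * ‖x - y‖ ^ α
            ≤ (φ s / ‖x - y‖ ^ (2*n)) * ((2*r) ^ (2*(n:ℝ) + α)) := by
          have e0 : φ s * ‖x - y‖ ^ α
              = (φ s / ‖x - y‖ ^ (2*n)) * (‖x - y‖ ^ (2*n) * ‖x - y‖ ^ α) := by
            field_simp
          rw [e0]
          exact mul_le_mul_of_nonneg_left e1 (div_nonneg hφs hd2n.le)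
        have expand : (φ s / φ 1 + 1) * (l * ‖x - y‖ ^ α)
            = (l / φ 1) * (φ s * ‖x - y‖ ^ α) + l * ‖x - y‖ ^ α := by
          field_simp
        have step3 := mul_le_mul_of_nonneg_left step2 hlφ
        calc |u x - u y| ≤ (l / φ 1) * (φ s * ‖x - y‖ ^ α) + l * ‖x - y‖ ^ α := by
              rw [← expand]; exact step1
          _ ≤ (l / φ 1) * ((φ s / ‖x - y‖ ^ (2*n)) * ((2*r) ^ (2*(n:ℝ) + α)))
              + l * ‖x - y‖ ^ α := by linarith
          _ = C₁ * (φ s / ‖x - y‖ ^ (2 * n)) + l * ‖x - y‖ ^ α := by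
              rw [hC₁def]; ring
      calc ENNReal.ofReal |u x - u y|
          ≤ ENNReal.ofReal (C₁ * (φ s / ‖x - y‖ ^ (2 * n)) + l * ‖x - y‖ ^ α) :=
            ENNReal.ofReal_le_ofReal hreal
        _ ≤ ENNReal.ofReal (C₁ * (φ s / ‖x - y‖ ^ (2 * n)))
            + ENNReal.ofReal (l * ‖x - y‖ ^ α) := ENNReal.ofReal_add_le
        _ = ENNReal.ofReal C₁ * ENNReal.ofReal (φ s / ‖x - y‖ ^ (2 * n))
            + ENNReal.ofReal l * ENNReal.ofReal (‖x - y‖ ^ α) := by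
            rw [ENNReal.ofReal_mul hC₁, ENNReal.ofReal_mul hl.le]
  -- measurability of slices and iterated integrals
  have hGm : Measurable fun x : EuclideanSpace ℝ (Fin n) => ∫⁻ y in B,
      ENNReal.ofReal (φ (|u x - u y| / (l * ‖x - y‖ ^ α)) / ‖x - y‖ ^ (2 * n)) :=
    Measurable.lintegral_prod_right' (ν := volume.restrict B) hFm
  have hkerm : Measurable fun p : EuclideanSpace ℝ (Fin n) × EuclideanSpace ℝ (Fin n) =>
      ENNReal.ofReal (‖p.1 - p.2‖ ^ α) :=
    ((measurable_fst.sub measurable_snd).norm.pow_const α).ennreal_ofReal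
  have hHm : Measurable fun x : EuclideanSpace ℝ (Fin n) => ∫⁻ y in B,
      ENNReal.ofReal (‖x - y‖ ^ α) :=
    Measurable.lintegral_prod_right' (ν := volume.restrict B) hkerm
  -- Riesz kernel bound
  have hK : (∫⁻ w in Metric.ball (0:EuclideanSpace ℝ (Fin n)) (2*r),
      ENNReal.ofReal (‖w‖ ^ α)) < ∞ := by
    apply finite_ball_rpow volume (α := α) ?_ hα2 (2*r)
    rw [finrank_euclideanSpace_fin]
    exact hα1
  have hHbound : ∀ x ∈ B, (∫⁻ y in B, ENNReal.ofReal (‖x - y‖ ^ α))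
      ≤ ∫⁻ w in Metric.ball (0:EuclideanSpace ℝ (Fin n)) (2*r),
          ENNReal.ofReal (‖w‖ ^ α) := by
    intro x hx
    have hsub : B ⊆ Metric.ball x (2*r) := by
      apply Metric.ball_subset_ball'
      have hzx : dist z x < r := by rw [dist_comm]; exact Metric.mem_ball.mp hx
      linarith
    calc (∫⁻ y in B, ENNReal.ofReal (‖x - y‖ ^ α))
        ≤ ∫⁻ y in Metric.ball x (2*r), ENNReal.ofReal (‖x - y‖ ^ α) :=
          lintegral_mono_set hsub
      _ = ∫⁻ w in Metric.ball (0:EuclideanSpace ℝ (Fin n)) (2*r),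
            ENNReal.ofReal (‖w‖ ^ α) := by
          have hpre : Metric.ball x (2*r)
              = (fun y => x - y) ⁻¹' Metric.ball (0:EuclideanSpace ℝ (Fin n)) (2*r) := by
            ext y
            simp only [Set.mem_preimage, Metric.mem_ball, dist_eq_norm, sub_zero]
            rw [norm_sub_rev]
          rw [hpre]
          exact (MeasureTheory.Measure.measurePreserving_sub_left volume x).setLIntegral_comp_preimage_emb
            (Homeomorph.subLeft x).measurableEmbedding
            (fun w => ENNReal.ofReal (‖w‖ ^ α)) (Metric.ball 0 (2*r))
  -- combine the inner integrals
  have hinner : ∀ x ∈ B, (∫⁻ y in B, ENNReal.ofReal |u x - u y|)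
      ≤ ENNReal.ofReal C₁ * (∫⁻ y in B,
          ENNReal.ofReal (φ (|u x - u y| / (l * ‖x - y‖ ^ α)) / ‖x - y‖ ^ (2 * n)))
        + ENNReal.ofReal l * (∫⁻ y in B, ENNReal.ofReal (‖x - y‖ ^ α)) := by
    intro x hx
    have h1 : (∫⁻ y in B, ENNReal.ofReal |u x - u y|)
        ≤ ∫⁻ y in B, (ENNReal.ofReal C₁
            * ENNReal.ofReal (φ (|u x - u y| / (l * ‖x - y‖ ^ α)) / ‖x - y‖ ^ (2 * n))
          + ENNReal.ofReal l * ENNReal.ofReal (‖x - y‖ ^ α)) := by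
      refine lintegral_mono_ae ?_
      filter_upwards [ae_restrict_mem measurableSet_ball] with y hy using hpt x hx y hy
    have hsl : Measurable fun y : EuclideanSpace ℝ (Fin n) =>
        ENNReal.ofReal (φ (|u x - u y| / (l * ‖x - y‖ ^ α)) / ‖x - y‖ ^ (2 * n)) :=
      hFm.comp measurable_prodMk_left
    refine h1.trans (le_of_eq ?_)
    rw [lintegral_add_left' ((hsl.const_mul (ENNReal.ofReal C₁)).aemeasurable),
      lintegral_const_mul' _ _ ENNReal.ofReal_ne_top,
      lintegral_const_mul' _ _ ENNReal.ofReal_ne_top]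
  -- outer integral
  have houter : (∫⁻ x in B, ∫⁻ y in B, ENNReal.ofReal |u x - u y|)
      ≤ ENNReal.ofReal C₁ * (∫⁻ x in B, ∫⁻ y in B,
          ENNReal.ofReal (φ (|u x - u y| / (l * ‖x - y‖ ^ α)) / ‖x - y‖ ^ (2 * n)))
        + ENNReal.ofReal l * (∫⁻ x in B, ∫⁻ y in B, ENNReal.ofReal (‖x - y‖ ^ α)) := by
    have h1 : (∫⁻ x in B, ∫⁻ y in B, ENNReal.ofReal |u x - u y|)
        ≤ ∫⁻ x in B, (ENNReal.ofReal C₁ * (∫⁻ y in B,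
            ENNReal.ofReal (φ (|u x - u y| / (l * ‖x - y‖ ^ α)) / ‖x - y‖ ^ (2 * n)))
          + ENNReal.ofReal l * (∫⁻ y in B, ENNReal.ofReal (‖x - y‖ ^ α))) := by
      refine lintegral_mono_ae ?_
      filter_upwards [ae_restrict_mem measurableSet_ball] with x hx using hinner x hx
    refine h1.trans (le_of_eq ?_)
    rw [lintegral_add_left' ((hGm.const_mul (ENNReal.ofReal C₁)).aemeasurable),
      lintegral_const_mul' _ _ ENNReal.ofReal_ne_top,
      lintegral_const_mul' _ _ ENNReal.ofReal_ne_top]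
  have hH2 : (∫⁻ x in B, ∫⁻ y in B, ENNReal.ofReal (‖x - y‖ ^ α))
      ≤ (∫⁻ w in Metric.ball (0:EuclideanSpace ℝ (Fin n)) (2*r),
          ENNReal.ofReal (‖w‖ ^ α)) * volume B := by
    have h1 : (∫⁻ x in B, ∫⁻ y in B, ENNReal.ofReal (‖x - y‖ ^ α))
        ≤ ∫⁻ _ in B, (∫⁻ w in Metric.ball (0:EuclideanSpace ℝ (Fin n)) (2*r),
            ENNReal.ofReal (‖w‖ ^ α)) := by
      refine lintegral_mono_ae ?_
      filter_upwards [ae_restrict_mem measurableSet_ball] with x hx using hHbound x hx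
    exact h1.trans (le_of_eq (setLIntegral_const _ _))
  have hJ : (∫⁻ x in B, ∫⁻ y in B, ENNReal.ofReal |u x - u y|) < ∞ := by
    refine lt_of_le_of_lt houter ?_
    refine ENNReal.add_lt_top.2 ⟨?_, ?_⟩
    · exact ENNReal.mul_lt_top ENNReal.ofReal_lt_top
        (lt_of_le_of_lt hI ENNReal.one_lt_top)
    · exact ENNReal.mul_lt_top ENNReal.ofReal_lt_top
        (lt_of_le_of_lt hH2 (ENNReal.mul_lt_top hK measure_ball_lt_top))
  -- choose a good point x₀
  have hgm : Measurable fun x : EuclideanSpace ℝ (Fin n) =>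
      ∫⁻ y in B, ENNReal.ofReal |u x - u y| :=
    Measurable.lintegral_prod_right' (ν := volume.restrict B)
      (f := fun p => ENNReal.ofReal |u p.1 - u p.2|)
      ((((hu.comp measurable_fst).sub (hu.comp measurable_snd)).abs).ennreal_ofReal)
  have hae : ∀ᵐ x ∂(volume.restrict B),
      (∫⁻ y in B, ENNReal.ofReal |u x - u y|) < ∞ := ae_lt_top hgm hJ.ne
  have hne : (ae (volume.restrict B)).NeBot := by
    rw [ae_neBot]
    intro hcon
    have h0 : volume B = 0 := by
      rw [← Measure.restrict_apply_univ, hcon]; simp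
    exact absurd h0 (Metric.measure_ball_pos volume z hr).ne'
  obtain ⟨x₀, hx₀fin, hx₀B⟩ := (hae.and (ae_restrict_mem measurableSet_ball)).exists
  -- conclude integrability
  constructor
  · exact (hu.aestronglyMeasurable).restrict
  · rw [hasFiniteIntegral_iff_norm]
    have hb : ∀ y, ENNReal.ofReal ‖u y‖
        ≤ ENNReal.ofReal |u x₀ - u y| + ENNReal.ofReal |u x₀| := by
      intro y
      have habs : ‖u y‖ ≤ |u x₀ - u y| + |u x₀| := by
        rw [Real.norm_eq_abs]
        calc |u y| = |(u y - u x₀) + u x₀| := by congr 1; ring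
          _ ≤ |u y - u x₀| + |u x₀| := abs_add_le _ _
          _ = |u x₀ - u y| + |u x₀| := by rw [abs_sub_comm]
      calc ENNReal.ofReal ‖u y‖ ≤ ENNReal.ofReal (|u x₀ - u y| + |u x₀|) :=
            ENNReal.ofReal_le_ofReal habs
        _ ≤ ENNReal.ofReal |u x₀ - u y| + ENNReal.ofReal |u x₀| := ENNReal.ofReal_add_le
    calc ∫⁻ y in B, ENNReal.ofReal ‖u y‖
        ≤ ∫⁻ y in B, (ENNReal.ofReal |u x₀ - u y| + ENNReal.ofReal |u x₀|) :=
          lintegral_mono fun y => hb y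
      _ = (∫⁻ y in B, ENNReal.ofReal |u x₀ - u y|) + ENNReal.ofReal |u x₀| * volume B := by
          rw [lintegral_add_right _ measurable_const, setLIntegral_const]
      _ < ∞ := ENNReal.add_lt_top.2 ⟨hx₀fin,
          ENNReal.mul_lt_top ENNReal.ofReal_lt_top measure_ball_lt_top⟩

theorem stmt8 (n : ℕ) (hn : 2 ≤ n) (α : ℝ) (hα1 : -(n : ℝ) < α) (hα2 : α < 0)
    (φ : ℝ → ℝ)
    (hconv : ConvexOn ℝ (Set.Ici 0) φ) (hcont : ContinuousOn φ (Set.Ici 0))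
    (hzero : φ 0 = 0) (hpos : ∀ t > 0, 0 < φ t)
    (htop : Filter.Tendsto φ Filter.atTop Filter.atTop)
    (Ω : Set (EuclideanSpace ℝ (Fin n))) (hopen : IsOpen Ω) (hconn : IsConnected Ω)
    (u : EuclideanSpace ℝ (Fin n) → ℝ) (hu : Measurable u)
    (hfin : (besovSet n α φ Ω u).Nonempty) :
    LocallyIntegrableOn u Ω := by
  obtain ⟨l, hl, hI⟩ := hfin
  intro z hz
  obtain ⟨r, hr, hrΩ⟩ := Metric.isOpen_iff.mp hopen z hz
  refine ⟨Metric.ball z r, nhdsWithin_le_nhds (Metric.ball_mem_nhds z hr), ?_⟩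
  apply core n α hα1 hα2 φ hconv hcont hzero hpos u hu l hl z r hr
  calc (∫⁻ x in Metric.ball z r, ∫⁻ y in Metric.ball z r,
      ENNReal.ofReal (φ (|u x - u y| / (l * ‖x - y‖ ^ α)) / ‖x - y‖ ^ (2 * n)))
      ≤ ∫⁻ x in Metric.ball z r, ∫⁻ y in Ω,
        ENNReal.ofReal (φ (|u x - u y| / (l * ‖x - y‖ ^ α)) / ‖x - y‖ ^ (2 * n)) :=
        lintegral_mono fun x => lintegral_mono' (Measure.restrict_mono hrΩ le_rfl) le_rfl
    _ ≤ ∫⁻ x in Ω, ∫⁻ y in Ω,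
        ENNReal.ofReal (φ (|u x - u y| / (l * ‖x - y‖ ^ α)) / ‖x - y‖ ^ (2 * n)) :=
        lintegral_mono' (Measure.restrict_mono hrΩ le_rfl) le_rfl
    _ ≤ 1 := hI
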